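/- There do not exist 5 pairwise completely independent S-Steiner trees in the complete bipartite graph K_{5,6} with bipartition X = {x₁,…,x₅}, Y = {y₁,…,y₆}, where S = {x₁, x₂, y₁, y₂}. -/
import Mathlib


open SimpleGraph

/-- A walk of `G` lies inside the subgraph `T` if all of its edges are edges of `T`. -/
def SimpleGraph.Subgraph.walkIn {V : Type*} {G : SimpleGraph V} (T : G.Subgraph)
    {u v : V} (P : G.Walk u v) : Prop :=
  ∀ e ∈ P.edges, e ∈ T.edgeSet

/-- `T` is an `S`-Steiner tree of `G`: a subtree of `G` containing all of `S`
all of whose leaves (vertices without two distinct neighbours) lie in `S`. -/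
def SimpleGraph.IsSteinerTree {V : Type*} (G : SimpleGraph V) (S : Set V)
    (T : G.Subgraph) : Prop :=
  T.coe.IsTree ∧ S ⊆ T.verts ∧
    ∀ v ∈ T.verts, ¬ (∃ a b, a ≠ b ∧ T.Adj v a ∧ T.Adj v b) → v ∈ S

/-- A family of subgraphs of `G` is completely independent (w.r.t. the terminal set `S`)
if the members are pairwise edge-disjoint, their vertex sets pairwise intersect exactly
in `S`, and for any two vertices of `S`, paths connecting them inside two distinct members
are internally disjoint. -/
def SimpleGraph.CompletelyIndependent {V : Type*} (G : SimpleGraph V) (S : Set V)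
    {ι : Type*} (Ts : ι → G.Subgraph) : Prop :=
  ∀ p q, p ≠ q →
    (Ts p).edgeSet ∩ (Ts q).edgeSet = ∅ ∧
    (Ts p).verts ∩ (Ts q).verts = S ∧
    ∀ x₁ ∈ S, ∀ x₂ ∈ S, x₁ ≠ x₂ →
      ∀ P Q : G.Walk x₁ x₂, P.IsPath → Q.IsPath →
        (Ts p).walkIn P → (Ts q).walkIn Q →
        ∀ v ∈ P.support, v ∈ Q.support → v = x₁ ∨ v = x₂

/-- A family of subgraphs of `G` is internally disjoint (w.r.t. the terminal set `S`)
if the members are pairwise edge-disjoint and their vertex sets pairwise intersect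
exactly in `S`. -/
def SimpleGraph.InternallyDisjoint {V : Type*} (G : SimpleGraph V) (S : Set V)
    {ι : Type*} (Ts : ι → G.Subgraph) : Prop :=
  ∀ p q, p ≠ q →
    (Ts p).edgeSet ∩ (Ts q).edgeSet = ∅ ∧ (Ts p).verts ∩ (Ts q).verts = S

/-- `κ*_G(S)`: the maximum number of pairwise completely independent `S`-Steiner trees. -/
noncomputable def SimpleGraph.cisstPacking {V : Type*} (G : SimpleGraph V) (S : Set V) : ℕ :=
  sSup {k | ∃ Ts : Fin k → G.Subgraph,
    (∀ i, G.IsSteinerTree S (Ts i)) ∧ G.CompletelyIndependent S Ts}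

/-- `κ_G(S)`: the maximum number of pairwise internally disjoint `S`-Steiner trees. -/
noncomputable def SimpleGraph.idstPacking {V : Type*} (G : SimpleGraph V) (S : Set V) : ℕ :=
  sSup {k | ∃ Ts : Fin k → G.Subgraph,
    (∀ i, G.IsSteinerTree S (Ts i)) ∧ G.InternallyDisjoint S Ts}

/-- The generalized `k*`-connectivity `κ*_k(G)`. -/
noncomputable def SimpleGraph.genConnStar {V : Type*} (G : SimpleGraph V) (k : ℕ) : ℕ :=
  sInf (G.cisstPacking '' {S : Set V | S.ncard = k})

/-- The generalized `k`-connectivity `κ_k(G)`. -/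
noncomputable def SimpleGraph.genConnK {V : Type*} (G : SimpleGraph V) (k : ℕ) : ℕ :=
  sInf (G.idstPacking '' {S : Set V | S.ncard = k})

private lemma path_two_nbrs {α : Type*} {H : SimpleGraph α} {a b : α} (p : H.Walk a b)
    (hp : p.IsPath) : ∀ v ∈ p.support, v ≠ a → v ≠ b →
      ∃ c d, c ≠ d ∧ H.Adj v c ∧ H.Adj v d := by
  induction p with
  | nil => intro v hv ha _; simp only [Walk.support_nil, List.mem_singleton] at hv
           exact absurd hv ha
  | @cons u w b h q ih =>
    intro v hv ha hb
    rw [Walk.support_cons, List.mem_cons] at hv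
    rcases hv with rfl | hv
    · exact absurd rfl ha
    rcases eq_or_ne v w with rfl | hvw
    · cases q with
      | nil => exact absurd rfl hb
      | @cons w x b h' q' =>
        refine ⟨u, x, ?_, h.symm, h'⟩
        intro hux
        have hcp := (Walk.cons_isPath_iff h _).mp hp
        exact hcp.2 (by rw [hux]; simp [Walk.support_cons])
    · exact ih ((Walk.cons_isPath_iff h q).mp hp).1 v hv hvw hb

theorem stmt_19 :
    ¬ ∃ Ts : Fin 5 → (completeBipartiteGraph (Fin 5) (Fin 6)).Subgraph,
      (∀ i, (completeBipartiteGraph (Fin 5) (Fin 6)).IsSteinerTree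
        ({Sum.inl 0, Sum.inl 1, Sum.inr 0, Sum.inr 1} : Set (Fin 5 ⊕ Fin 6)) (Ts i)) ∧
      (completeBipartiteGraph (Fin 5) (Fin 6)).CompletelyIndependent
        ({Sum.inl 0, Sum.inl 1, Sum.inr 0, Sum.inr 1} : Set (Fin 5 ⊕ Fin 6)) Ts := by
  rintro ⟨Ts, hT, hCI⟩
  set S : Set (Fin 5 ⊕ Fin 6) := {Sum.inl 0, Sum.inl 1, Sum.inr 0, Sum.inr 1} with hS
  have hmem : ∀ i, ∀ s ∈ S, s ∈ (Ts i).verts := fun i => (hT i).2.1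
  have hconn : ∀ i, (Ts i).coe.Connected := fun i => (hT i).1.isConnected
  -- edge disjointness
  have hdisj : ∀ i j, i ≠ j → ∀ u v : Fin 5 ⊕ Fin 6,
      (Ts i).Adj u v → (Ts j).Adj u v → False := by
    intro i j hij u v hi hj
    have h1 := (hCI i j hij).1
    have : s(u, v) ∈ (Ts i).edgeSet ∩ (Ts j).edgeSet := ⟨hi, hj⟩
    rw [h1] at this
    exact this
  -- vertex intersections
  have hverts : ∀ i j, i ≠ j → ∀ v, v ∈ (Ts i).verts → v ∈ (Ts j).verts → v ∈ S := by
    intro i j hij v hvi hvj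
    have h2 := (hCI i j hij).2.1
    rw [← h2]; exact ⟨hvi, hvj⟩
  -- neighbor existence
  have hnbr : ∀ i (u w : Fin 5 ⊕ Fin 6), u ∈ (Ts i).verts → w ∈ (Ts i).verts → u ≠ w →
      ∃ v, (Ts i).Adj u v := by
    intro i u w hu hw huw
    obtain ⟨p⟩ := (hconn i).preconnected ⟨u, hu⟩ ⟨w, hw⟩
    have hnil : ¬ p.Nil := Walk.not_nil_of_ne (fun h => huw (congrArg Subtype.val h))
    obtain ⟨x, h, q, rfl⟩ := Walk.not_nil_iff.mp hnil
    exact ⟨x.1, h⟩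
  -- every tree i : each y-vertex of S has a unique inl-neighbor structure: leaf lemma
  have hleaf : ∀ (y : Fin 6), Sum.inr y ∈ S →
      ∀ i, ∀ a b : Fin 5, (Ts i).Adj (Sum.inr y) (Sum.inl a) →
        (Ts i).Adj (Sum.inr y) (Sum.inl b) → a = b := by
    intro y hy
    have hgex : ∀ i, ∃ m : Fin 5, (Ts i).Adj (Sum.inr y) (Sum.inl m) := by
      intro i
      obtain ⟨v, hv⟩ := hnbr i (Sum.inr y) (Sum.inl 0) (hmem i _ hy)
        (hmem i _ (by simp [hS])) (by simp)
      have hGadj : (completeBipartiteGraph (Fin 5) (Fin 6)).Adj (Sum.inr y) v := (Ts i).adj_sub hv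
      rcases v with m | m
      · exact ⟨m, hv⟩
      · simp [completeBipartiteGraph] at hGadj
    choose g hg using hgex
    have ginj : Function.Injective g := by
      intro i j hij
      by_contra hne
      exact hdisj i j hne _ _ (hg i) (hij ▸ hg j)
    have gsurj : Function.Surjective g := Finite.surjective_of_injective ginj
    intro i a b ha hb
    by_contra hab
    -- one of a, b differs from g i
    have : ∃ c : Fin 5, c ≠ g i ∧ (Ts i).Adj (Sum.inr y) (Sum.inl c) := by
      rcases eq_or_ne a (g i) with rfl | hc
      · exact ⟨b, fun h => hab h.symm, hb⟩
      · exact ⟨a, hc, ha⟩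
    obtain ⟨c, hcg, hc⟩ := this
    obtain ⟨j, rfl⟩ := gsurj c
    have hji : j ≠ i := fun h => hcg (by rw [h])
    exact hdisj j i hji _ _ (hg j) hc
  -- internal vertex on the x₁–x₂ path in each tree
  have hmid : ∀ i, ∃ (k : Fin 6) (a b : Fin 5), a ≠ b ∧
      (Ts i).Adj (Sum.inr k) (Sum.inl a) ∧ (Ts i).Adj (Sum.inr k) (Sum.inl b) := by
    intro i
    have hx1 : (Sum.inl 0 : Fin 5 ⊕ Fin 6) ∈ (Ts i).verts := hmem i _ (by simp [hS])
    have hx2 : (Sum.inl 1 : Fin 5 ⊕ Fin 6) ∈ (Ts i).verts := hmem i _ (by simp [hS])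
    obtain ⟨w⟩ := (hconn i).preconnected ⟨Sum.inl 0, hx1⟩ ⟨Sum.inl 1, hx2⟩
    obtain ⟨p, hp⟩ := w.toPath
    have hnil : ¬ p.Nil := Walk.not_nil_of_ne (by simp)
    obtain ⟨v, hadj, q, rfl⟩ := Walk.not_nil_iff.mp hnil
    have hGadj : (completeBipartiteGraph (Fin 5) (Fin 6)).Adj (Sum.inl 0) v.1 := (Ts i).adj_sub hadj
    obtain ⟨k, hk⟩ : ∃ k : Fin 6, v.1 = Sum.inr k := by
      rcases hv : v.1 with m | m
      · rw [hv] at hGadj; simp [completeBipartiteGraph] at hGadj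
      · exact ⟨m, rfl⟩
    have hvs : v ∈ (Walk.cons hadj q).support := by simp [Walk.support_cons]
    have hva : v ≠ ⟨Sum.inl 0, hx1⟩ := by
      intro h; rw [h] at hk; simp at hk
    have hvb : v ≠ ⟨Sum.inl 1, hx2⟩ := by
      intro h; rw [h] at hk; simp at hk
    obtain ⟨c, d, hcd, hc, hd⟩ := path_two_nbrs _ hp v hvs hva hvb
    have hc' : (Ts i).Adj (Sum.inr k) c.1 := hk ▸ hc
    have hd' : (Ts i).Adj (Sum.inr k) d.1 := hk ▸ hd
    obtain ⟨ac, hac⟩ : ∃ ac : Fin 5, c.1 = Sum.inl ac := by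
      have := (Ts i).adj_sub hc'
      rcases hcv : c.1 with m | m
      · exact ⟨m, rfl⟩
      · rw [hcv] at this; simp [completeBipartiteGraph] at this
    obtain ⟨ad, had⟩ : ∃ ad : Fin 5, d.1 = Sum.inl ad := by
      have := (Ts i).adj_sub hd'
      rcases hdv : d.1 with m | m
      · exact ⟨m, rfl⟩
      · rw [hdv] at this; simp [completeBipartiteGraph] at this
    refine ⟨k, ac, ad, ?_, hac ▸ hc', had ▸ hd'⟩
    intro h
    apply hcd
    apply Subtype.ext
    rw [hac, had, h]
  choose k a b hab ha hb using hmid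
  -- k i avoids 0 and 1
  have hk0 : ∀ i, k i ≠ 0 := by
    intro i h
    exact hab i (hleaf 0 (by simp [hS]) i (a i) (b i) (h ▸ ha i) (h ▸ hb i))
  have hk1 : ∀ i, k i ≠ 1 := by
    intro i h
    exact hab i (hleaf 1 (by simp [hS]) i (a i) (b i) (h ▸ ha i) (h ▸ hb i))
  -- k is injective
  have kinj : Function.Injective k := by
    intro i j hij
    by_contra hne
    have hvi : (Sum.inr (k i) : Fin 5 ⊕ Fin 6) ∈ (Ts i).verts := (ha i).fst_mem
    have hvj : (Sum.inr (k i) : Fin 5 ⊕ Fin 6) ∈ (Ts j).verts := by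
      rw [hij]; exact (ha j).fst_mem
    have := hverts i j hne _ hvi hvj
    simp only [hS, Set.mem_insert_iff, Set.mem_singleton_iff] at this
    rcases this with h | h | h | h
    · exact absurd h (by simp)
    · exact absurd h (by simp)
    · exact hk0 i (by injection h)
    · exact hk1 i (by injection h)
  -- pigeonhole
  have hcard : (Finset.univ : Finset (Fin 5)).card ≤
      ((Finset.univ : Finset (Fin 6)).filter (fun x => x ≠ 0 ∧ x ≠ 1)).card := by
    apply Finset.card_le_card_of_injOn k
    · intro i _; simp [hk0 i, hk1 i]
    · exact kinj.injOn
  simp only [Finset.card_univ, Fintype.card_fin] at hcard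
  have : ((Finset.univ : Finset (Fin 6)).filter (fun x => x ≠ 0 ∧ x ≠ 1)).card = 4 := by decide
  omega
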